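/- Let H be a real Hilbert space, F : H → H a contraction with factor ρ ∈ (0,1) with fixed point u*, and (S_α)_{α>0} a family of non-expansive self-maps of H. Let p ∈ (0,2) and M ≥ 0 be such that ‖S_α(u*) − u*‖ ≤ M α^{1−p/2} for all α > 0. Fix c_0 > 0 and set α_k := (ρ^{k+1} c_0)^{2/(2−p)} for k ≥ 0. Then the iteration u_0 := 0, u_{k+1} := S_{α_k}(F(u_k)) satisfies for all k ≥ 0: ‖u_k − u*‖ ≤ (‖u*‖ + ((1+ρ)/(1−ρ)) c_0 M k) ρ^k. -/

import Mathlib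

/-- **A priori parameter choice, algebraic decay, rate `ρ`.** With `α_k = (ρ^{k+1} c₀)^{2/(2-p)}`
and thresholding error `‖S_α u* - u*‖ ≤ M α^{1-p/2}`, the iterates `u_{k+1} = S_{α_k}(F u_k)`,
`u_0 = 0`, satisfy `‖u_k - u*‖ ≤ (‖u*‖ + ((1+ρ)/(1-ρ)) c₀ M k) ρ^k`. -/
theorem apriori_iteration_wlp
    {H : Type*} [NormedAddCommGroup H] [InnerProductSpace ℝ H] [CompleteSpace H]
    (F : H → H) (ρ : ℝ) (hρ0 : 0 < ρ) (hρ1 : ρ < 1)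
    (hF : ∀ v w : H, ‖F v - F w‖ ≤ ρ * ‖v - w‖)
    (ustar : H) (hfix : F ustar = ustar)
    (S : ℝ → H → H)
    (hS : ∀ α : ℝ, 0 < α → ∀ v w : H, ‖S α v - S α w‖ ≤ ‖v - w‖)
    (p : ℝ) (hp0 : 0 < p) (hp2 : p < 2)
    (M : ℝ) (hM : 0 ≤ M)
    (happrox : ∀ α : ℝ, 0 < α → ‖S α ustar - ustar‖ ≤ M * α ^ (1 - p/2))
    (c0 : ℝ) (hc0 : 0 < c0)
    (u : ℕ → H) (hu0 : u 0 = 0)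
    (hrec : ∀ k : ℕ, u (k + 1) = S ((ρ ^ (k + 1) * c0) ^ (2 / (2 - p))) (F (u k))) :
    ∀ k : ℕ, ‖u k - ustar‖ ≤ (‖ustar‖ + ((1 + ρ) / (1 - ρ)) * c0 * M * k) * ρ ^ k := by
  intro k
  induction k with
  | zero => simp [hu0]
  | succ k ih =>
    set x := ρ ^ (k + 1) * c0 with hxdef
    have hx : (0:ℝ) < x := mul_pos (pow_pos hρ0 _) hc0
    have hαpos : 0 < x ^ (2 / (2 - p)) := Real.rpow_pos_of_pos hx _
    have h2p : (2 - p) ≠ 0 := by linarith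
    have hαpow : (x ^ (2 / (2 - p))) ^ (1 - p/2) = x := by
      rw [← Real.rpow_mul hx.le]
      have : 2 / (2 - p) * (1 - p / 2) = 1 := by field_simp
      rw [this, Real.rpow_one]
    -- triangle inequality step
    have step : ‖u (k+1) - ustar‖ ≤ ρ * ‖u k - ustar‖ + M * x := by
      rw [hrec k]
      calc ‖S (x ^ (2 / (2 - p))) (F (u k)) - ustar‖
          ≤ ‖S (x ^ (2 / (2 - p))) (F (u k)) - S (x ^ (2 / (2 - p))) ustar‖
            + ‖S (x ^ (2 / (2 - p))) ustar - ustar‖ := norm_sub_le_norm_sub_add_norm_sub _ _ _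
        _ ≤ ‖F (u k) - ustar‖ + M * (x ^ (2 / (2 - p))) ^ (1 - p/2) :=
            add_le_add (hS _ hαpos _ _) (happrox _ hαpos)
        _ ≤ ρ * ‖u k - ustar‖ + M * x := by
            rw [hαpow]
            refine add_le_add ?_ le_rfl
            calc ‖F (u k) - ustar‖ = ‖F (u k) - F ustar‖ := by rw [hfix]
              _ ≤ ρ * ‖u k - ustar‖ := hF _ _
    have hC : (1:ℝ) ≤ (1 + ρ) / (1 - ρ) := by
      rw [le_div_iff₀ (by linarith)]; linarith
    have h2 : ρ * ((‖ustar‖ + (1 + ρ) / (1 - ρ) * c0 * M * k) * ρ ^ k) + M * x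
        ≤ (‖ustar‖ + (1 + ρ) / (1 - ρ) * c0 * M * (k+1)) * ρ ^ (k+1) := by
      rw [hxdef]
      have : M * c0 ≤ (1 + ρ) / (1 - ρ) * c0 * M := by
        nlinarith [mul_nonneg hM hc0.le]
      rw [pow_succ]
      nlinarith [mul_le_mul_of_nonneg_right this (mul_pos (pow_pos hρ0 k) hρ0).le]
    calc ‖u (k+1) - ustar‖ ≤ ρ * ‖u k - ustar‖ + M * x := step
      _ ≤ ρ * ((‖ustar‖ + (1 + ρ) / (1 - ρ) * c0 * M * k) * ρ ^ k) + M * x := by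
          gcongr
      _ ≤ _ := by push_cast; exact h2
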